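/- arXiv:gr-qc/0403024 — 2 statements merged into one kernel-verified Lean document; each statement's English description precedes it below -/
import Mathlib

section
/- Let T_{abcd} be a completely symmetric trace-free rank-4 tensor on 4-dimensional Minkowski space satisfying identity (Rai). Then for every null vector ℓ, the covector v with components v_d = T_{abcd} ℓ^a ℓ^b ℓ^c is null, i.e. v_d v^d = 0. -/
open Finset

noncomputable section

/-- Minkowski metric with lower indices, `diag(1,-1,-1,-1)`. -/
def gdn (a b : Fin 4) : ℝ := if a = b then (if a = 0 then 1 else -1) else 0

/-- Inverse Minkowski metric (upper indices); it is numerically equal to `gdn`. -/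
def gup (a b : Fin 4) : ℝ := if a = b then (if a = 0 then 1 else -1) else 0

/-- The mixed metric `g_a{}^b`, i.e. the Kronecker delta. -/
def kd (a b : Fin 4) : ℝ := if a = b then 1 else 0

/-- Complete symmetry of a rank-4 tensor (invariance under all index permutations,
generated by the adjacent transpositions). -/
def Sym4 (T : Fin 4 → Fin 4 → Fin 4 → Fin 4 → ℝ) : Prop :=
  ∀ a b c d, T a b c d = T b a c d ∧ T a b c d = T a c b d ∧ T a b c d = T a b d c

/-- Trace-freeness of a rank-4 tensor: every contraction of two of its indices vanishes. -/
def TraceFree4 (T : Fin 4 → Fin 4 → Fin 4 → Fin 4 → ℝ) : Prop :=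
  (∀ c d, ∑ j, ∑ k, gup j k * T j k c d = 0) ∧
  (∀ c d, ∑ j, ∑ k, gup j k * T j c k d = 0) ∧
  (∀ c d, ∑ j, ∑ k, gup j k * T j c d k = 0) ∧
  (∀ c d, ∑ j, ∑ k, gup j k * T c j k d = 0) ∧
  (∀ c d, ∑ j, ∑ k, gup j k * T c j d k = 0) ∧
  (∀ c d, ∑ j, ∑ k, gup j k * T c d j k = 0)

/-- The full contraction `T_{jklm} T^{jklm}`. -/
def TT (T : Fin 4 → Fin 4 → Fin 4 → Fin 4 → ℝ) : ℝ :=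
  ∑ j, ∑ j1, ∑ k, ∑ k1, ∑ l, ∑ l1, ∑ m, ∑ m1,
    gup j j1 * gup k k1 * gup l l1 * gup m m1 * T j k l m * T j1 k1 l1 m1

/-- `T_{jabc} T^{jefg}` (free indices `e f g` up). -/
def lhsR (T : Fin 4 → Fin 4 → Fin 4 → Fin 4 → ℝ) (a b c e f g : Fin 4) : ℝ :=
  ∑ j, ∑ j1, ∑ e1, ∑ f1, ∑ g1,
    gup j j1 * gup e e1 * gup f f1 * gup g g1 * T j a b c * T j1 e1 f1 g1

/-- `T_{bcjk} T^{fgjk}`. -/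
def S2 (T : Fin 4 → Fin 4 → Fin 4 → Fin 4 → ℝ) (b c f g : Fin 4) : ℝ :=
  ∑ j, ∑ j1, ∑ k, ∑ k1, ∑ f1, ∑ g1,
    gup j j1 * gup k k1 * gup f f1 * gup g g1 * T b c j k * T f1 g1 j1 k1

/-- `T_{jkb}{}^{f} T_{c}{}^{gjk}`. -/
def S2' (T : Fin 4 → Fin 4 → Fin 4 → Fin 4 → ℝ) (b f c g : Fin 4) : ℝ :=
  ∑ j, ∑ j1, ∑ k, ∑ k1, ∑ f1, ∑ g1,
    gup j j1 * gup k k1 * gup f f1 * gup g g1 * T j k b f1 * T c g1 j1 k1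

/-- `T_{cjk}{}^{e} T^{fgjk}`. -/
def S3 (T : Fin 4 → Fin 4 → Fin 4 → Fin 4 → ℝ) (c e f g : Fin 4) : ℝ :=
  ∑ j, ∑ j1, ∑ k, ∑ k1, ∑ e1, ∑ f1, ∑ g1,
    gup j j1 * gup k k1 * gup e e1 * gup f f1 * gup g g1 * T c j k e1 * T f1 g1 j1 k1

/-- `T_{jkab} T_{c}{}^{gjk}`. -/
def S4 (T : Fin 4 → Fin 4 → Fin 4 → Fin 4 → ℝ) (a b c g : Fin 4) : ℝ :=
  ∑ j, ∑ j1, ∑ k, ∑ k1, ∑ g1,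
    gup j j1 * gup k k1 * gup g g1 * T j k a b * T c g1 j1 k1

/-- Symmetrization over three indices. -/
def sym3 (F : Fin 4 → Fin 4 → Fin 4 → ℝ) (a b c : Fin 4) : ℝ :=
  (F a b c + F a c b + F b a c + F b c a + F c a b + F c b a) / 6

/-- Simultaneous symmetrization over the index groups `(a,b,c)` and `(e,f,g)`. -/
def sym33 (F : Fin 4 → Fin 4 → Fin 4 → Fin 4 → Fin 4 → Fin 4 → ℝ)
    (a b c e f g : Fin 4) : ℝ :=
  sym3 (fun x y z => sym3 (fun u v w => F x y z u v w) e f g) a b c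

/-- Identity (Rai):
`T_{jabc}T^{jefg} = (3/2) g_(a^(e T_bc)jk T^fg)jk + (3/4) g_(a^(e T_|jk|b^f T_c)^g)jk
 - (3/4) g_(ab T_c)jk^(e T^fg)jk - (3/4) g^(ef T_jk(ab T_c)^g)jk
 + (1/32)(3 g_(ab g_c)^(e g^fg) - 4 g_(a^(e g_b^f g_c)^g)) T_{jklm}T^{jklm}`,
with symmetrizations over the groups `(a,b,c)` and `(e,f,g)`. -/
def RaiId (T : Fin 4 → Fin 4 → Fin 4 → Fin 4 → ℝ) : Prop :=
  ∀ a b c e f g : Fin 4,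
    lhsR T a b c e f g =
      (3/2) * sym33 (fun a b c e f g => kd a e * S2 T b c f g) a b c e f g
      + (3/4) * sym33 (fun a b c e f g => kd a e * S2' T b f c g) a b c e f g
      - (3/4) * sym33 (fun a b c e f g => gdn a b * S3 T c e f g) a b c e f g
      - (3/4) * sym33 (fun a b c e f g => gup e f * S4 T a b c g) a b c e f g
      + (1/32) * (3 * sym33 (fun a b c e f g => gdn a b * kd c e * gup f g) a b c e f g
          - 4 * sym33 (fun a b c e f g => kd a e * kd b f * kd c g) a b c e f g) * TT T


def sgn (a : Fin 4) : ℝ := if a = 0 then 1 else -1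

lemma ss (e : Fin 4) : sgn e * sgn e = 1 := by unfold sgn; split <;> norm_num

lemma colU (e : Fin 4) (X : Fin 4 → ℝ) : (∑ x, gup e x * X x) = sgn e * X e := by
  rw [Finset.sum_eq_single e]
  · simp [gup, sgn]
  · intro b _ hb
    simp [gup, Ne.symm hb]
  · simp

lemma sum3_perm_213 (H : Fin 4 → Fin 4 → Fin 4 → ℝ) :
    (∑ a, ∑ b, ∑ c, H a b c) = ∑ a, ∑ b, ∑ c, H b a c := Finset.sum_comm

lemma sum3_perm_132 (H : Fin 4 → Fin 4 → Fin 4 → ℝ) :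
    (∑ a, ∑ b, ∑ c, H a b c) = ∑ a, ∑ b, ∑ c, H a c b :=
  Finset.sum_congr rfl fun _ _ => Finset.sum_comm

lemma sum3_perm_231 (H : Fin 4 → Fin 4 → Fin 4 → ℝ) :
    (∑ a, ∑ b, ∑ c, H a b c) = ∑ a, ∑ b, ∑ c, H b c a := by
  rw [sum3_perm_132 H]
  exact sum3_perm_213 fun x y z => H x z y

lemma sum3_perm_312 (H : Fin 4 → Fin 4 → Fin 4 → ℝ) :
    (∑ a, ∑ b, ∑ c, H a b c) = ∑ a, ∑ b, ∑ c, H c a b := by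
  rw [sum3_perm_213 H]
  exact sum3_perm_132 fun x y z => H y x z

lemma sum3_perm_321 (H : Fin 4 → Fin 4 → Fin 4 → ℝ) :
    (∑ a, ∑ b, ∑ c, H a b c) = ∑ a, ∑ b, ∑ c, H c b a := by
  rw [sum3_perm_213 H]
  exact sum3_perm_231 fun x y z => H y x z

-- bubbling the innermost sum to the outside
lemma sc3 (F : Fin 4 → Fin 4 → Fin 4 → ℝ) :
    (∑ a, ∑ b, ∑ j, F a b j) = ∑ j, ∑ a, ∑ b, F a b j :=
  (Finset.sum_congr rfl fun _ _ => Finset.sum_comm).trans Finset.sum_comm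

lemma sc4 (F : Fin 4 → Fin 4 → Fin 4 → Fin 4 → ℝ) :
    (∑ a, ∑ b, ∑ c, ∑ j, F a b c j) = ∑ j, ∑ a, ∑ b, ∑ c, F a b c j :=
  (Finset.sum_congr rfl fun a _ => sc3 (F a)).trans Finset.sum_comm

lemma sc5 (F : Fin 4 → Fin 4 → Fin 4 → Fin 4 → Fin 4 → ℝ) :
    (∑ a, ∑ b, ∑ c, ∑ d, ∑ j, F a b c d j) = ∑ j, ∑ a, ∑ b, ∑ c, ∑ d, F a b c d j :=
  (Finset.sum_congr rfl fun a _ => sc4 (F a)).trans Finset.sum_comm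

lemma sc6 (F : Fin 4 → Fin 4 → Fin 4 → Fin 4 → Fin 4 → Fin 4 → ℝ) :
    (∑ a, ∑ b, ∑ c, ∑ d, ∑ e, ∑ j, F a b c d e j) =
      ∑ j, ∑ a, ∑ b, ∑ c, ∑ d, ∑ e, F a b c d e j :=
  (Finset.sum_congr rfl fun a _ => sc5 (F a)).trans Finset.sum_comm

lemma sc7 (F : Fin 4 → Fin 4 → Fin 4 → Fin 4 → Fin 4 → Fin 4 → Fin 4 → ℝ) :
    (∑ a, ∑ b, ∑ c, ∑ d, ∑ e, ∑ f, ∑ j, F a b c d e f j) =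
      ∑ j, ∑ a, ∑ b, ∑ c, ∑ d, ∑ e, ∑ f, F a b c d e f j :=
  (Finset.sum_congr rfl fun a _ => sc6 (F a)).trans Finset.sum_comm

def c6 (P Q : Fin 4 → ℝ)
    (M : Fin 4 → Fin 4 → Fin 4 → Fin 4 → Fin 4 → Fin 4 → ℝ) : ℝ :=
  ∑ a, ∑ b, ∑ c, ∑ e, ∑ f, ∑ g,
    M a b c e f g * (P a * P b * P c * (Q e * Q f * Q g))

lemma c6_congr (P Q : Fin 4 → ℝ) (M N : Fin 4 → Fin 4 → Fin 4 → Fin 4 → Fin 4 → Fin 4 → ℝ)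
    (h : ∀ a b c e f g, M a b c e f g = N a b c e f g) : c6 P Q M = c6 P Q N := by
  unfold c6
  exact Finset.sum_congr rfl fun a _ => Finset.sum_congr rfl fun b _ =>
    Finset.sum_congr rfl fun c _ => Finset.sum_congr rfl fun e _ =>
    Finset.sum_congr rfl fun f _ => Finset.sum_congr rfl fun g _ => by rw [h]

lemma c6_add (P Q : Fin 4 → ℝ) (M N : Fin 4 → Fin 4 → Fin 4 → Fin 4 → Fin 4 → Fin 4 → ℝ) :
    c6 P Q (fun a b c e f g => M a b c e f g + N a b c e f g) = c6 P Q M + c6 P Q N := by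
  simp [c6, add_mul, Finset.sum_add_distrib]

lemma c6_smul (P Q : Fin 4 → ℝ) (r : ℝ) (M : Fin 4 → Fin 4 → Fin 4 → Fin 4 → Fin 4 → Fin 4 → ℝ) :
    c6 P Q (fun a b c e f g => r * M a b c e f g) = r * c6 P Q M := by
  simp [c6, mul_assoc, Finset.mul_sum]

section perms
variable (P Q : Fin 4 → ℝ) (M : Fin 4 → Fin 4 → Fin 4 → Fin 4 → Fin 4 → Fin 4 → ℝ)

lemma c6_permL_132 : c6 P Q (fun a b c e f g => M a c b e f g) = c6 P Q M := by
  unfold c6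
  rw [sum3_perm_132 (fun a b c => ∑ e, ∑ f, ∑ g,
    M a c b e f g * (P a * P b * P c * (Q e * Q f * Q g)))]
  exact Finset.sum_congr rfl fun a _ => Finset.sum_congr rfl fun b _ =>
    Finset.sum_congr rfl fun c _ => Finset.sum_congr rfl fun e _ =>
    Finset.sum_congr rfl fun f _ => Finset.sum_congr rfl fun g _ => by ring

lemma c6_permL_213 : c6 P Q (fun a b c e f g => M b a c e f g) = c6 P Q M := by
  unfold c6
  rw [sum3_perm_213 (fun a b c => ∑ e, ∑ f, ∑ g,
    M b a c e f g * (P a * P b * P c * (Q e * Q f * Q g)))]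
  exact Finset.sum_congr rfl fun a _ => Finset.sum_congr rfl fun b _ =>
    Finset.sum_congr rfl fun c _ => Finset.sum_congr rfl fun e _ =>
    Finset.sum_congr rfl fun f _ => Finset.sum_congr rfl fun g _ => by ring

lemma c6_permL_231 : c6 P Q (fun a b c e f g => M b c a e f g) = c6 P Q M := by
  unfold c6
  rw [sum3_perm_312 (fun a b c => ∑ e, ∑ f, ∑ g,
    M b c a e f g * (P a * P b * P c * (Q e * Q f * Q g)))]
  exact Finset.sum_congr rfl fun a _ => Finset.sum_congr rfl fun b _ =>
    Finset.sum_congr rfl fun c _ => Finset.sum_congr rfl fun e _ =>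
    Finset.sum_congr rfl fun f _ => Finset.sum_congr rfl fun g _ => by ring

lemma c6_permL_312 : c6 P Q (fun a b c e f g => M c a b e f g) = c6 P Q M := by
  unfold c6
  rw [sum3_perm_231 (fun a b c => ∑ e, ∑ f, ∑ g,
    M c a b e f g * (P a * P b * P c * (Q e * Q f * Q g)))]
  exact Finset.sum_congr rfl fun a _ => Finset.sum_congr rfl fun b _ =>
    Finset.sum_congr rfl fun c _ => Finset.sum_congr rfl fun e _ =>
    Finset.sum_congr rfl fun f _ => Finset.sum_congr rfl fun g _ => by ring

lemma c6_permL_321 : c6 P Q (fun a b c e f g => M c b a e f g) = c6 P Q M := by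
  unfold c6
  rw [sum3_perm_321 (fun a b c => ∑ e, ∑ f, ∑ g,
    M c b a e f g * (P a * P b * P c * (Q e * Q f * Q g)))]
  exact Finset.sum_congr rfl fun a _ => Finset.sum_congr rfl fun b _ =>
    Finset.sum_congr rfl fun c _ => Finset.sum_congr rfl fun e _ =>
    Finset.sum_congr rfl fun f _ => Finset.sum_congr rfl fun g _ => by ring


lemma c6_permR_132 : c6 P Q (fun a b c e f g => M a b c e g f) = c6 P Q M := by
  unfold c6
  refine Finset.sum_congr rfl fun a _ => Finset.sum_congr rfl fun b _ =>
    Finset.sum_congr rfl fun c _ => ?_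
  rw [sum3_perm_132 (fun e f g =>
    M a b c e g f * (P a * P b * P c * (Q e * Q f * Q g)))]
  exact Finset.sum_congr rfl fun e _ => Finset.sum_congr rfl fun f _ =>
    Finset.sum_congr rfl fun g _ => by ring

lemma c6_permR_213 : c6 P Q (fun a b c e f g => M a b c f e g) = c6 P Q M := by
  unfold c6
  refine Finset.sum_congr rfl fun a _ => Finset.sum_congr rfl fun b _ =>
    Finset.sum_congr rfl fun c _ => ?_
  rw [sum3_perm_213 (fun e f g =>
    M a b c f e g * (P a * P b * P c * (Q e * Q f * Q g)))]
  exact Finset.sum_congr rfl fun e _ => Finset.sum_congr rfl fun f _ =>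
    Finset.sum_congr rfl fun g _ => by ring

lemma c6_permR_231 : c6 P Q (fun a b c e f g => M a b c f g e) = c6 P Q M := by
  unfold c6
  refine Finset.sum_congr rfl fun a _ => Finset.sum_congr rfl fun b _ =>
    Finset.sum_congr rfl fun c _ => ?_
  rw [sum3_perm_312 (fun e f g =>
    M a b c f g e * (P a * P b * P c * (Q e * Q f * Q g)))]
  exact Finset.sum_congr rfl fun e _ => Finset.sum_congr rfl fun f _ =>
    Finset.sum_congr rfl fun g _ => by ring

lemma c6_permR_312 : c6 P Q (fun a b c e f g => M a b c g e f) = c6 P Q M := by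
  unfold c6
  refine Finset.sum_congr rfl fun a _ => Finset.sum_congr rfl fun b _ =>
    Finset.sum_congr rfl fun c _ => ?_
  rw [sum3_perm_231 (fun e f g =>
    M a b c g e f * (P a * P b * P c * (Q e * Q f * Q g)))]
  exact Finset.sum_congr rfl fun e _ => Finset.sum_congr rfl fun f _ =>
    Finset.sum_congr rfl fun g _ => by ring

lemma c6_permR_321 : c6 P Q (fun a b c e f g => M a b c g f e) = c6 P Q M := by
  unfold c6
  refine Finset.sum_congr rfl fun a _ => Finset.sum_congr rfl fun b _ =>
    Finset.sum_congr rfl fun c _ => ?_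
  rw [sum3_perm_321 (fun e f g =>
    M a b c g f e * (P a * P b * P c * (Q e * Q f * Q g)))]
  exact Finset.sum_congr rfl fun e _ => Finset.sum_congr rfl fun f _ =>
    Finset.sum_congr rfl fun g _ => by ring

end perms

section syms
variable (P Q : Fin 4 → ℝ) (M : Fin 4 → Fin 4 → Fin 4 → Fin 4 → Fin 4 → Fin 4 → ℝ)

lemma c6_symL :
    c6 P Q (fun a b c e f g => sym3 (fun x y z => M x y z e f g) a b c) = c6 P Q M := by
  have h : ∀ a b c e f g : Fin 4, sym3 (fun x y z => M x y z e f g) a b c =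
      (1/6) * M a b c e f g + ((1/6) * M a c b e f g + ((1/6) * M b a c e f g +
      ((1/6) * M b c a e f g + ((1/6) * M c a b e f g + (1/6) * M c b a e f g)))) := by
    intros; simp [sym3]; ring
  rw [c6_congr P Q _ _ h]
  simp only [c6_add, c6_smul]
  rw [c6_permL_132 P Q M, c6_permL_213 P Q M, c6_permL_231 P Q M,
    c6_permL_312 P Q M, c6_permL_321 P Q M]
  ring

lemma c6_symR :
    c6 P Q (fun a b c e f g => sym3 (fun u v w => M a b c u v w) e f g) = c6 P Q M := by
  have h : ∀ a b c e f g : Fin 4, sym3 (fun u v w => M a b c u v w) e f g =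
      (1/6) * M a b c e f g + ((1/6) * M a b c e g f + ((1/6) * M a b c f e g +
      ((1/6) * M a b c f g e + ((1/6) * M a b c g e f + (1/6) * M a b c g f e)))) := by
    intros; simp [sym3]; ring
  rw [c6_congr P Q _ _ h]
  simp only [c6_add, c6_smul]
  rw [c6_permR_132 P Q M, c6_permR_213 P Q M, c6_permR_231 P Q M,
    c6_permR_312 P Q M, c6_permR_321 P Q M]
  ring

lemma c6_sym33 :
    c6 P Q (fun a b c e f g => sym33 M a b c e f g) = c6 P Q M := by
  have h : ∀ a b c e f g : Fin 4, sym33 M a b c e f g =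
      sym3 (fun x y z => (fun x y z e f g =>
        sym3 (fun u v w => M x y z u v w) e f g) x y z e f g) a b c := fun _ _ _ _ _ _ => rfl
  rw [c6_congr P Q _ _ h, c6_symL P Q (fun x y z e f g => sym3 (fun u v w => M x y z u v w) e f g),
    c6_symR P Q M]
end syms

section kills
variable (P Q : Fin 4 → ℝ) (Z : Fin 4 → Fin 4 → ℝ)
  (R : Fin 4 → Fin 4 → Fin 4 → Fin 4 → ℝ)
  (F : Fin 4 → Fin 4 → Fin 4 → Fin 4 → Fin 4 → Fin 4 → ℝ)

lemma killDN (hF : ∀ a b c e f g, F a b c e f g = Z a b * R c e f g)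
    (hZ : (∑ x, ∑ y, Z x y * (P x * P y)) = 0) : c6 P Q F = 0 := by
  rw [c6_congr P Q F _ hF]
  unfold c6
  have h2 : ∀ a b c e f g : Fin 4,
      Z a b * R c e f g * (P a * P b * P c * (Q e * Q f * Q g)) =
      (Z a b * (P a * P b)) * (R c e f g * (P c * (Q e * (Q f * Q g)))) := by intros; ring
  simp only [h2]
  simp only [← Finset.mul_sum]
  simp only [← Finset.sum_mul]
  rw [hZ, zero_mul]

lemma killLU (hF : ∀ a b c e f g, F a b c e f g = Z a e * R b c f g)
    (hZ : (∑ x, ∑ y, Z x y * (P x * Q y)) = 0) : c6 P Q F = 0 := by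
  rw [c6_congr P Q F _ hF]
  unfold c6
  refine Eq.trans (Finset.sum_congr rfl fun a _ =>
    sum3_perm_231 (fun b c e => ∑ f, ∑ g,
      Z a e * R b c f g * (P a * P b * P c * (Q e * Q f * Q g)))) ?_
  have h2 : ∀ a e b c f g : Fin 4,
      Z a e * R b c f g * (P a * P b * P c * (Q e * Q f * Q g)) =
      (Z a e * (P a * Q e)) * (R b c f g * (P b * (P c * (Q f * Q g)))) := by intros; ring
  simp only [h2]
  simp only [← Finset.mul_sum]
  simp only [← Finset.sum_mul]
  rw [hZ, zero_mul]

lemma killUP (hF : ∀ a b c e f g, F a b c e f g = Z e f * R a b c g)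
    (hZ : (∑ x, ∑ y, Z x y * (Q x * Q y)) = 0) : c6 P Q F = 0 := by
  rw [c6_congr P Q F _ hF]
  unfold c6
  have h2 : ∀ a b c e f g : Fin 4,
      Z e f * R a b c g * (P a * P b * P c * (Q e * Q f * Q g)) =
      (Z e f * (Q e * Q f)) * (R a b c g * (P a * (P b * (P c * Q g)))) := by intros; ring
  simp only [h2]
  simp only [← Finset.mul_sum]
  simp only [← Finset.sum_mul]
  simp only [hZ, zero_mul, Finset.sum_const_zero]
end kills

lemma lhsR_collapsed (T : Fin 4 → Fin 4 → Fin 4 → Fin 4 → ℝ) (a b c e f g : Fin 4) :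
    lhsR T a b c e f g =
      ∑ j, sgn j * (sgn e * (sgn f * (sgn g * (T j a b c * T j e f g)))) := by
  unfold lhsR
  simp only [mul_assoc]
  simp only [← Finset.mul_sum]
  simp only [colU]

lemma main_contract (T : Fin 4 → Fin 4 → Fin 4 → Fin 4 → ℝ) (l : Fin 4 → ℝ) :
    c6 l (fun x => sgn x * l x) (fun a b c e f g => lhsR T a b c e f g) =
      ∑ j, sgn j * ((∑ a, ∑ b, ∑ c, T j a b c * l a * l b * l c) *
        (∑ a, ∑ b, ∑ c, T j a b c * l a * l b * l c)) := by
  unfold c6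
  simp only [lhsR_collapsed]
  simp only [Finset.sum_mul]
  rw [sc7]
  refine Finset.sum_congr rfl fun j _ => ?_
  conv_rhs => rw [Finset.mul_sum]
  simp only [Finset.sum_mul, Finset.mul_sum]
  refine Finset.sum_congr rfl fun a _ => Finset.sum_congr rfl fun b _ =>
    Finset.sum_congr rfl fun c _ => Finset.sum_congr rfl fun e _ =>
    Finset.sum_congr rfl fun f _ => Finset.sum_congr rfl fun g _ => ?_
  linear_combination (T j a b c * T j e f g * l a * l b * l c * l e * l f * l g *
      sgn j * sgn f * sgn f * sgn g * sgn g) * ss e +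
    (T j a b c * T j e f g * l a * l b * l c * l e * l f * l g * sgn j * sgn g * sgn g) * ss f +
    (T j a b c * T j e f g * l a * l b * l c * l e * l f * l g * sgn j) * ss g

/-- If `T` satisfies (Rai) then `T_{abcd} ℓ^a ℓ^b ℓ^c` is null whenever `ℓ` is null. -/

theorem stmt_8 (T : Fin 4 → Fin 4 → Fin 4 → Fin 4 → ℝ)
    (hSym : Sym4 T) (hTF : TraceFree4 T) (hRai : RaiId T) :
    ∀ l : Fin 4 → ℝ,
      (∑ a, ∑ b, gdn a b * l a * l b) = 0 →
      (∑ d, ∑ d1, gup d d1 *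
        (∑ a, ∑ b, ∑ c, T a b c d * l a * l b * l c) *
        (∑ a, ∑ b, ∑ c, T a b c d1 * l a * l b * l c)) = 0 := by
  intro l hl
  simp (config := { decide := true }) [gdn, Fin.sum_univ_four] at hl
  have zDN : (∑ x, ∑ y, gdn x y * (l x * l y)) = 0 := by
    simp (config := { decide := true }) [gdn, Fin.sum_univ_four]; linarith
  have zkd : (∑ x, ∑ y, kd x y * (l x * (sgn y * l y))) = 0 := by
    simp (config := { decide := true }) [kd, sgn, Fin.sum_univ_four]; linarith
  have zUP : (∑ x, ∑ y, gup x y * (sgn x * l x * (sgn y * l y))) = 0 := by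
    simp (config := { decide := true }) [gup, sgn, Fin.sum_univ_four]; linarith
  have hT4 : ∀ a b c d, T a b c d = T d a b c := by
    intro a b c d
    rw [(hSym a b c d).2.2, (hSym a b d c).2.1, (hSym a d b c).1]
  have hV : ∀ d : Fin 4, (∑ a, ∑ b, ∑ c, T a b c d * l a * l b * l c)
      = ∑ a, ∑ b, ∑ c, T d a b c * l a * l b * l c := by
    intro d
    refine Finset.sum_congr rfl fun a _ => Finset.sum_congr rfl fun b _ =>
      Finset.sum_congr rfl fun c _ => ?_
    rw [hT4]
  have key : (∑ d, ∑ d1, gup d d1 *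
        (∑ a, ∑ b, ∑ c, T a b c d * l a * l b * l c) *
        (∑ a, ∑ b, ∑ c, T a b c d1 * l a * l b * l c))
      = c6 l (fun x => sgn x * l x) (fun a b c e f g => lhsR T a b c e f g) := by
    rw [main_contract]
    simp only [hV]
    simp only [mul_assoc]
    simp only [colU]
  rw [key]
  have hsplit : c6 l (fun x => sgn x * l x) (fun a b c e f g => lhsR T a b c e f g)
      = c6 l (fun x => sgn x * l x) (fun a b c e f g =>
          (3/2) * sym33 (fun a b c e f g => kd a e * S2 T b c f g) a b c e f g
          + ((3/4) * sym33 (fun a b c e f g => kd a e * S2' T b f c g) a b c e f g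
          + ((-(3/4)) * sym33 (fun a b c e f g => gdn a b * S3 T c e f g) a b c e f g
          + ((-(3/4)) * sym33 (fun a b c e f g => gup e f * S4 T a b c g) a b c e f g
          + ((3/32 * TT T) * sym33 (fun a b c e f g => gdn a b * kd c e * gup f g) a b c e f g
          + (-(1/8) * TT T) *
              sym33 (fun a b c e f g => kd a e * kd b f * kd c g) a b c e f g))))) :=
    c6_congr _ _ _ _ (fun a b c e f g => by rw [hRai a b c e f g]; ring)
  rw [hsplit]
  simp only [c6_add, c6_smul]
  rw [c6_sym33 l (fun x => sgn x * l x) (fun a b c e f g => kd a e * S2 T b c f g),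
    c6_sym33 l (fun x => sgn x * l x) (fun a b c e f g => kd a e * S2' T b f c g),
    c6_sym33 l (fun x => sgn x * l x) (fun a b c e f g => gdn a b * S3 T c e f g),
    c6_sym33 l (fun x => sgn x * l x) (fun a b c e f g => gup e f * S4 T a b c g),
    c6_sym33 l (fun x => sgn x * l x) (fun a b c e f g => gdn a b * kd c e * gup f g),
    c6_sym33 l (fun x => sgn x * l x) (fun a b c e f g => kd a e * kd b f * kd c g)]
  have k1 : c6 l (fun x => sgn x * l x) (fun a b c e f g => kd a e * S2 T b c f g) = 0 :=
    killLU _ _ kd (fun b c f g => S2 T b c f g) _ (fun _ _ _ _ _ _ => rfl) zkd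
  have k2 : c6 l (fun x => sgn x * l x) (fun a b c e f g => kd a e * S2' T b f c g) = 0 :=
    killLU _ _ kd (fun b c f g => S2' T b f c g) _ (fun _ _ _ _ _ _ => rfl) zkd
  have k3 : c6 l (fun x => sgn x * l x) (fun a b c e f g => gdn a b * S3 T c e f g) = 0 :=
    killDN _ _ gdn (fun c e f g => S3 T c e f g) _ (fun _ _ _ _ _ _ => rfl) zDN
  have k4 : c6 l (fun x => sgn x * l x) (fun a b c e f g => gup e f * S4 T a b c g) = 0 :=
    killUP _ _ gup (fun a b c g => S4 T a b c g) _ (fun _ _ _ _ _ _ => rfl) zUP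
  have k5 : c6 l (fun x => sgn x * l x) (fun a b c e f g => gdn a b * kd c e * gup f g) = 0 :=
    killDN _ _ gdn (fun c e f g => kd c e * gup f g) _ (fun _ _ _ _ _ _ => mul_assoc _ _ _) zDN
  have k6 : c6 l (fun x => sgn x * l x) (fun a b c e f g => kd a e * kd b f * kd c g) = 0 :=
    killLU _ _ kd (fun b c f g => kd b f * kd c g) _ (fun _ _ _ _ _ _ => mul_assoc _ _ _) zkd
  rw [k1, k2, k3, k4, k5, k6]
  ring
end
end

section
/- Let n ≥ 1 and let T be a Hermitian spinor tensor with n unprimed and n primed indices (i.e. T : ({0,1}^n) × ({0,1}^n) → ℂ with conj(T(A,A')) = T(A',A)). Then T satisfies T_{A...B}{}^{A'...B'} T_{C...D}{}^{C'...D'} = T_{A...B}{}^{C'...D'} T_{C...D}{}^{A'...B'} for all index values if and only if there exist a complex-valued spinor χ with n unprimed indices and a sign s ∈ {1,-1} such that s T_{A...B}{}^{A'...B'} = χ_{A...B} · conj(χ_{A'...B'}); moreover, if T is completely symmetric in its unprimed indices and in its primed indices, then χ can be chosen completely symmetric. -/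
open Finset

noncomputable section

/-- The spinor ε-symbol, `ε_{01} = 1` (the same numerical values are used for
`ε^{AB}`, `ε̄_{A'B'}` and `ε̄^{A'B'}`). -/
def eps (A B : Fin 2) : ℂ :=
  if A = 0 ∧ B = 1 then 1 else if A = 1 ∧ B = 0 then -1 else 0

/-- Symmetrization over a pair of spinor indices. -/
def s2c {ι : Type*} (F : ι → ι → ℂ) (x y : ι) : ℂ := (F x y + F y x) / 2


/-- `T_{A...B}{}^{A'...B'}`: the spinor tensor with all primed indices raised. -/
def TupN (n : ℕ) (T : (Fin n → Fin 2) → (Fin n → Fin 2) → ℂ)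
    (A A' : Fin n → Fin 2) : ℂ :=
  ∑ P : Fin n → Fin 2, (∏ i, eps (A' i) (P i)) * T A P

/-- `conj(χ)^{A'...B'}`: the complex conjugate spinor with all its primed indices raised. -/
def conjUpN (n : ℕ) (χ : (Fin n → Fin 2) → ℂ) (A' : Fin n → Fin 2) : ℂ :=
  ∑ P : Fin n → Fin 2, (∏ i, eps (A' i) (P i)) * (starRingEnd ℂ) (χ P)

def Emat (n : ℕ) (A P : Fin n → Fin 2) : ℂ := ∏ i, eps (A i) (P i)

lemma eps2 (a b : Fin 2) : ∑ p : Fin 2, eps a p * eps p b = -(if a = b then 1 else 0) := by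
  fin_cases a <;> fin_cases b <;> simp [eps, Fin.sum_univ_two]

lemma EE {n : ℕ} (B P : Fin n → Fin 2) :
    ∑ A' : Fin n → Fin 2, Emat n B A' * Emat n A' P
      = (-1 : ℂ) ^ n * (if B = P then 1 else 0) := by
  have h1 : ∑ A' : Fin n → Fin 2, Emat n B A' * Emat n A' P
      = ∏ i, ∑ a : Fin 2, eps (B i) a * eps a (P i) := by
    rw [Fintype.prod_sum]
    exact Finset.sum_congr rfl fun A' _ => (Finset.prod_mul_distrib).symm
  rw [h1]
  have h2 : ∀ i, ∑ a : Fin 2, eps (B i) a * eps a (P i)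
      = (-1 : ℂ) * (if B i = P i then 1 else 0) := by
    intro i; rw [eps2]; ring
  simp only [h2]
  rw [Finset.prod_mul_distrib, Finset.prod_const, Finset.card_univ, Fintype.card_fin]
  congr 1
  by_cases h : B = P
  · subst h; simp
  · obtain ⟨i, hi⟩ := Function.ne_iff.mp h
    rw [if_neg h]
    exact Finset.prod_eq_zero (Finset.mem_univ i) (if_neg hi)

lemma TupN_emat {n : ℕ} (T : (Fin n → Fin 2) → (Fin n → Fin 2) → ℂ) (A A' : Fin n → Fin 2) :
    TupN n T A A' = ∑ P, Emat n A' P * T A P := rfl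

lemma conjUpN_emat {n : ℕ} (χ : (Fin n → Fin 2) → ℂ) (A' : Fin n → Fin 2) :
    conjUpN n χ A' = ∑ P, Emat n A' P * (starRingEnd ℂ) (χ P) := rfl

lemma inv_T {n : ℕ} (T : (Fin n → Fin 2) → (Fin n → Fin 2) → ℂ) (A B : Fin n → Fin 2) :
    ∑ A' : Fin n → Fin 2, Emat n B A' * TupN n T A A' = (-1 : ℂ) ^ n * T A B := by
  calc ∑ A' : Fin n → Fin 2, Emat n B A' * TupN n T A A'
      = ∑ A' : Fin n → Fin 2, ∑ P, Emat n B A' * Emat n A' P * T A P := by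
        simp only [TupN_emat, Finset.mul_sum, mul_assoc]
    _ = ∑ P : Fin n → Fin 2, (∑ A' : Fin n → Fin 2, Emat n B A' * Emat n A' P) * T A P := by
        rw [Finset.sum_comm]
        exact Finset.sum_congr rfl fun P _ => (Finset.sum_mul _ _ _).symm
    _ = ∑ P : Fin n → Fin 2, ((-1 : ℂ) ^ n * (if B = P then 1 else 0)) * T A P := by
        simp only [EE]
    _ = (-1 : ℂ) ^ n * T A B := by
        simp [ite_mul, mul_ite, Finset.sum_ite_eq]

lemma minors_transfer {n : ℕ} (T : (Fin n → Fin 2) → (Fin n → Fin 2) → ℂ)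
    (hU : ∀ A C A' C', TupN n T A A' * TupN n T C C' = TupN n T A C' * TupN n T C A') :
    ∀ A C B D, T A B * T C D = T A D * T C B := by
  intro A C B D
  set U := TupN n T with hUdef
  have e1 : (∑ x : Fin n → Fin 2, Emat n B x * U A x) * (∑ y : Fin n → Fin 2, Emat n D y * U C y)
      = ∑ x : Fin n → Fin 2, ∑ y : Fin n → Fin 2,
          Emat n B x * Emat n D y * (U A y * U C x) := by
    rw [Fintype.sum_mul_sum]
    refine Finset.sum_congr rfl fun x _ => Finset.sum_congr rfl fun y _ => ?_
    have := hU A C x y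
    calc Emat n B x * U A x * (Emat n D y * U C y)
        = Emat n B x * Emat n D y * (U A x * U C y) := by ring
      _ = Emat n B x * Emat n D y * (U A y * U C x) := by rw [this]
  have e2 : (∑ x : Fin n → Fin 2, Emat n D x * U A x) * (∑ y : Fin n → Fin 2, Emat n B y * U C y)
      = ∑ x : Fin n → Fin 2, ∑ y : Fin n → Fin 2,
          Emat n B x * Emat n D y * (U A y * U C x) := by
    rw [Fintype.sum_mul_sum]
    rw [Finset.sum_comm]
    refine Finset.sum_congr rfl fun x _ => Finset.sum_congr rfl fun y _ => ?_
    ring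
  have key : ((-1 : ℂ) ^ n * T A B) * ((-1 : ℂ) ^ n * T C D)
      = ((-1 : ℂ) ^ n * T A D) * ((-1 : ℂ) ^ n * T C B) := by
    rw [← inv_T T A B, ← inv_T T C D, ← inv_T T A D, ← inv_T T C B]
    rw [e1, e2]
  have hsq : (-1 : ℂ) ^ n * (-1 : ℂ) ^ n = 1 := by
    rw [← pow_add]
    exact Even.neg_one_pow ⟨n, rfl⟩
  have := key
  calc T A B * T C D = ((-1 : ℂ) ^ n * (-1 : ℂ) ^ n) * (T A B * T C D) := by rw [hsq, one_mul]
    _ = ((-1 : ℂ) ^ n * (-1 : ℂ) ^ n) * (T A D * T C B) := by linear_combination key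
    _ = T A D * T C B := by rw [hsq, one_mul]

lemma rank1 {I : Type*} (T : I → I → ℂ)
    (hH : ∀ A B, (starRingEnd ℂ) (T A B) = T B A)
    (hm : ∀ A C B D, T A B * T C D = T A D * T C B) :
    ∃ s : ℝ, (s = 1 ∨ s = -1) ∧ ∃ χ : I → ℂ,
      ∀ A B, (s : ℂ) * T A B = χ A * (starRingEnd ℂ) (χ B) := by
  by_cases h0 : ∀ A B, T A B = 0
  · exact ⟨1, Or.inl rfl, fun _ => 0, fun A B => by simp [h0]⟩
  · push_neg at h0
    obtain ⟨A₀, B₀, hAB⟩ := h0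
    have hd : T A₀ A₀ ≠ 0 := by
      intro h
      have := hm A₀ B₀ B₀ A₀
      rw [← hH A₀ B₀, h, zero_mul] at this
      exact hAB (by simpa using (mul_self_eq_zero (a := ‖T A₀ B₀‖)).mp (by
        have := this
        simpa [Complex.mul_conj'] using congrArg norm this))
    have hdre : T A₀ A₀ = ((T A₀ A₀).re : ℂ) := by
      have := hH A₀ A₀
      exact (Complex.conj_eq_iff_re.mp this).symm
    set m : ℝ := (T A₀ A₀).re with hm0
    have hmne : m ≠ 0 := by
      intro h; apply hd; rw [hdre, h]; simp
    set r : ℝ := Real.sqrt |m| with hr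
    have hrpos : 0 < r := Real.sqrt_pos.mpr (abs_pos.mpr hmne)
    have hr2 : (r : ℝ) * r = |m| := Real.mul_self_sqrt (abs_nonneg m)
    refine ⟨if 0 < m then 1 else -1, by split <;> simp, fun A => T A A₀ / r, fun A B => ?_⟩
    have hmin : T A A₀ * T A₀ B = T A B * T A₀ A₀ := hm A A₀ A₀ B
    have hconj : (starRingEnd ℂ) (T B A₀ / (r : ℂ)) = T A₀ B / (r : ℂ) := by
      rw [map_div₀, hH]
      norm_num
    rw [hconj]
    rw [div_mul_div_comm, hmin, hdre]
    have hrr : ((r : ℂ) * r) = (|m| : ℝ) := by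
      push_cast [← hr2]; ring
    rw [hrr]
    rw [eq_div_iff (by exact_mod_cast (by positivity : (|m| : ℝ) ≠ 0) : ((|m| : ℝ) : ℂ) ≠ 0)]
    by_cases hpos : 0 < m
    · rw [if_pos hpos, abs_of_pos hpos]; push_cast; ring
    · rw [if_neg hpos, abs_of_nonpos (le_of_not_gt hpos)]; push_cast; ring


/-- A Hermitian spinor tensor with `n` unprimed and `n` primed indices satisfies
`T_{A..B}{}^{A'..B'} T_{C..D}{}^{C'..D'} = T_{A..B}{}^{C'..D'} T_{C..D}{}^{A'..B'}` iff,
up to sign, it factorizes as `χ_{A..B} conj(χ)_{A'..B'}`; moreover, when `T` is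
completely symmetric in each index group, `χ` can be chosen completely symmetric. -/
theorem stmt_9 (n : ℕ) (hn : 1 ≤ n)
    (T : (Fin n → Fin 2) → (Fin n → Fin 2) → ℂ)
    (hHerm : ∀ A A', (starRingEnd ℂ) (T A A') = T A' A) :
    ((∀ A C A' C', TupN n T A A' * TupN n T C C' = TupN n T A C' * TupN n T C A') ↔
      ∃ s : ℝ, (s = 1 ∨ s = -1) ∧ ∃ χ : (Fin n → Fin 2) → ℂ,
        ∀ A A', (s : ℂ) * TupN n T A A' = χ A * conjUpN n χ A')
    ∧
    (((∀ (A A' : Fin n → Fin 2) (σ : Equiv.Perm (Fin n)), T (A ∘ σ) A' = T A A') ∧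
      (∀ (A A' : Fin n → Fin 2) (σ : Equiv.Perm (Fin n)), T A (A' ∘ σ) = T A A')) →
      ((∀ A C A' C', TupN n T A A' * TupN n T C C' = TupN n T A C' * TupN n T C A') ↔
        ∃ s : ℝ, (s = 1 ∨ s = -1) ∧ ∃ χ : (Fin n → Fin 2) → ℂ,
          (∀ (A : Fin n → Fin 2) (σ : Equiv.Perm (Fin n)), χ (A ∘ σ) = χ A) ∧
          ∀ A A', (s : ℂ) * TupN n T A A' = χ A * conjUpN n χ A')) := by
  have fwd : (∀ A C A' C', TupN n T A A' * TupN n T C C' = TupN n T A C' * TupN n T C A') →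
      ∃ s : ℝ, (s = 1 ∨ s = -1) ∧ ∃ χ : (Fin n → Fin 2) → ℂ,
        (∀ A B, (s : ℂ) * T A B = χ A * (starRingEnd ℂ) (χ B)) ∧
        (∀ A A', (s : ℂ) * TupN n T A A' = χ A * conjUpN n χ A') := by
    intro hU
    obtain ⟨s, hs, χ, hχ⟩ := rank1 T hHerm (minors_transfer T hU)
    refine ⟨s, hs, χ, hχ, fun A A' => ?_⟩
    calc (s : ℂ) * TupN n T A A' = ∑ P, Emat n A' P * ((s : ℂ) * T A P) := by
          rw [TupN_emat, Finset.mul_sum]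
          exact Finset.sum_congr rfl fun P _ => by ring
      _ = ∑ P, Emat n A' P * (χ A * (starRingEnd ℂ) (χ P)) :=
          Finset.sum_congr rfl fun P _ => by rw [hχ]
      _ = χ A * conjUpN n χ A' := by
          rw [conjUpN_emat, Finset.mul_sum]
          exact Finset.sum_congr rfl fun P _ => by ring
  have bwd : (∃ s : ℝ, (s = 1 ∨ s = -1) ∧ ∃ χ : (Fin n → Fin 2) → ℂ,
        ∀ A A', (s : ℂ) * TupN n T A A' = χ A * conjUpN n χ A') →
      (∀ A C A' C', TupN n T A A' * TupN n T C C' = TupN n T A C' * TupN n T C A') := by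
    rintro ⟨s, hs, χ, hχ⟩ A C A' C'
    have hs2 : (s : ℂ) * s = 1 := by rcases hs with h | h <;> rw [h] <;> norm_num
    have e : ((s:ℂ) * TupN n T A A') * ((s:ℂ) * TupN n T C C')
        = ((s:ℂ) * TupN n T A C') * ((s:ℂ) * TupN n T C A') := by
      rw [hχ, hχ, hχ, hχ]; ring
    have e2 : ((s:ℂ) * s) * (TupN n T A A' * TupN n T C C')
        = ((s:ℂ) * s) * (TupN n T A C' * TupN n T C A') := by linear_combination e
    rw [hs2, one_mul, one_mul] at e2
    exact e2
  constructor
  · constructor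
    · intro hU
      obtain ⟨s, hs, χ, _, h2⟩ := fwd hU
      exact ⟨s, hs, χ, h2⟩
    · exact bwd
  · rintro ⟨hsymA, -⟩
    constructor
    · intro hU
      obtain ⟨s, hs, χ, h1, h2⟩ := fwd hU
      by_cases hχ0 : ∀ A, χ A = 0
      · exact ⟨s, hs, χ, fun A σ => by rw [hχ0, hχ0], h2⟩
      · push_neg at hχ0
        obtain ⟨B, hB⟩ := hχ0
        refine ⟨s, hs, χ, fun A σ => ?_, h2⟩
        have hB' : (starRingEnd ℂ) (χ B) ≠ 0 := by simpa using hB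
        apply mul_right_cancel₀ hB'
        rw [← h1, ← h1, hsymA]
    · rintro ⟨s, hs, χ, -, h⟩
      exact bwd ⟨s, hs, χ, h⟩
end
end
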